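/- Elliptic estimate on a connected finite graph: there exists a constant C > 0, depending only on the graph (its weights, measure, diameter and λ₁), such that for every u : V → ℝ, max_V u − min_V u ≤ C·‖Δu‖_∞, where ‖Δu‖_∞ = max_x |Δu(x)|. -/

import Mathlib

open Finset Real

noncomputable def graphLap {V : Type*} [Fintype V] (μ : V → ℝ) (w : V → V → ℝ)
    (u : V → ℝ) (x : V) : ℝ :=
  (1 / μ x) * ∑ y, w x y * (u y - u x)

noncomputable def gradSq {V : Type*} [Fintype V] (μ : V → ℝ) (w : V → V → ℝ)
    (u : V → ℝ) (x : V) : ℝ :=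
  (1 / (2 * μ x)) * ∑ y, w x y * (u y - u x) ^ 2

def GraphConnected {V : Type*} (w : V → V → ℝ) : Prop :=
  ∀ x y : V, Relation.ReflTransGen (fun a b => 0 < w a b) x y

lemma harmonic_const {V : Type*} [Fintype V] [Nonempty V]
    (μ : V → ℝ) (w : V → V → ℝ)
    (hμ : ∀ x, 0 < μ x) (hw : ∀ x y, 0 ≤ w x y)
    (hconn : GraphConnected w) (u : V → ℝ)
    (h : ∀ x, graphLap μ w u x = 0) :
    ∀ x y : V, u x = u y := by
  -- max point
  obtain ⟨a, -, ha⟩ := Finset.exists_mem_eq_sup' (Finset.univ_nonempty (α := V)) u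
  set M := Finset.univ.sup' Finset.univ_nonempty u with hM
  have hMax : ∀ z, u z ≤ M := fun z => Finset.le_sup' u (mem_univ z)
  have key : ∀ z, u z = M := by
    intro z
    have hpath := hconn a z
    induction hpath with
    | refl => exact ha.symm
    | tail hst hw2 ih =>
      rename_i b c
      -- u b = M, w b c > 0, show u c = M
      have hΔ := h b
      rw [graphLap] at hΔ
      have hμb : (1 : ℝ) / μ b ≠ 0 := one_div_ne_zero (ne_of_gt (hμ b))
      have hsum : ∑ y, w b y * (u y - u b) = 0 := by
        rcases mul_eq_zero.mp hΔ with h1 | h1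
        · exact absurd h1 hμb
        · exact h1
      have hnonpos : ∀ y ∈ Finset.univ, w b y * (u y - u b) ≤ 0 := by
        intro y _
        apply mul_nonpos_of_nonneg_of_nonpos (hw b y)
        rw [ih]
        linarith [hMax y]
      have := (Finset.sum_eq_zero_iff_of_nonpos hnonpos).mp hsum c (mem_univ c)
      rcases mul_eq_zero.mp this with h1 | h1
      · exact absurd h1 (ne_of_gt hw2)
      · have : u c = u b := by linarith
        rw [this, ih]
  intro x y; rw [key x, key y]

lemma graphLap_smul {V : Type*} [Fintype V] (μ : V → ℝ) (w : V → V → ℝ)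
    (c : ℝ) (u : V → ℝ) (x : V) :
    graphLap μ w (fun y => c * u y) x = c * graphLap μ w u x := by
  simp only [graphLap, Finset.mul_sum]
  apply Finset.sum_congr rfl
  intro y _; ring

lemma gcont {V : Type*} [Fintype V] (μ : V → ℝ) (w : V → V → ℝ) :
    Continuous (fun u : V → ℝ => ∑ x, |graphLap μ w u x|) := by
  apply continuous_finset_sum
  intro x _
  apply Continuous.abs
  unfold graphLap
  apply Continuous.mul continuous_const
  apply continuous_finset_sum
  intro y _
  exact Continuous.mul continuous_const ((continuous_apply y).sub (continuous_apply x))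

lemma graphLap_shift {V : Type*} [Fintype V] (μ : V → ℝ) (w : V → V → ℝ)
    (c : ℝ) (u : V → ℝ) (x : V) :
    graphLap μ w (fun y => u y - c) x = graphLap μ w u x := by
  simp only [graphLap, sub_sub_sub_cancel_right]

theorem elliptic_estimate {V : Type*} [Fintype V] [Nonempty V]
    (μ : V → ℝ) (w : V → V → ℝ)
    (hμ : ∀ x, 0 < μ x) (hsym : ∀ x y, w x y = w y x) (hw : ∀ x y, 0 ≤ w x y)
    (hconn : GraphConnected w) :
    ∃ C : ℝ, 0 < C ∧ ∀ u : V → ℝ,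
      Finset.univ.sup' Finset.univ_nonempty u
        - Finset.univ.inf' Finset.univ_nonempty u
      ≤ C * Finset.univ.sup' Finset.univ_nonempty
          (fun x => |graphLap μ w u x|) := by
  classical
  have hRHSnn : ∀ u : V → ℝ, 0 ≤ Finset.univ.sup' Finset.univ_nonempty
      (fun x => |graphLap μ w u x|) := by
    intro u
    obtain ⟨x⟩ := ‹Nonempty V›
    exact le_trans (abs_nonneg (graphLap μ w u x))
      (Finset.le_sup' (fun x => |graphLap μ w u x|) (mem_univ x))
  rcases subsingleton_or_nontrivial V with hS | hT
  · refine ⟨1, one_pos, fun u => ?_⟩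
    obtain ⟨a, -, ha⟩ := Finset.exists_mem_eq_sup' (Finset.univ_nonempty (α := V)) u
    obtain ⟨b, -, hb⟩ := Finset.exists_mem_eq_inf' (Finset.univ_nonempty (α := V)) u
    rw [ha, hb, Subsingleton.elim a b, sub_self, one_mul]
    exact hRHSnn u
  -- nontrivial case
  obtain ⟨a, b, hab⟩ := exists_pair_ne V
  set g : (V → ℝ) → ℝ := fun u => ∑ x, |graphLap μ w u x| with hg
  set K : Set (V → ℝ) := {u | (∑ x, u x) = 0 ∧ (∑ x, |u x|) = 1} with hK
  -- K compact
  have hKclosed : IsClosed K := by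
    apply IsClosed.inter
    · exact isClosed_eq (continuous_finset_sum _ (fun x _ => continuous_apply x)) continuous_const
    · exact isClosed_eq (continuous_finset_sum _ (fun x _ => (continuous_apply x).abs)) continuous_const
  have hKsub : K ⊆ Set.pi Set.univ (fun _ : V => Set.Icc (-1 : ℝ) 1) := by
    intro u hu x _
    have h1 : |u x| ≤ 1 := by
      rw [← hu.2]
      exact Finset.single_le_sum (fun i _ => abs_nonneg (u i)) (mem_univ x)
    exact abs_le.mp h1
  have hKcompact : IsCompact K :=
    IsCompact.of_isClosed_subset (isCompact_univ_pi (fun _ => isCompact_Icc)) hKclosed hKsub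
  -- K nonempty
  have hKne : K.Nonempty := by
    refine ⟨fun x => (1/2) * ((if x = a then (1:ℝ) else 0) - (if x = b then 1 else 0)), ?_, ?_⟩
    · rw [← Finset.mul_sum, Finset.sum_sub_distrib,
        Finset.sum_ite_eq' Finset.univ a (fun _ => (1:ℝ)),
        Finset.sum_ite_eq' Finset.univ b (fun _ => (1:ℝ))]
      simp
    · have hpt : ∀ x : V, |(1/2 : ℝ) * ((if x = a then (1:ℝ) else 0) - (if x = b then 1 else 0))|
          = (1/2) * ((if x = a then (1:ℝ) else 0) + (if x = b then 1 else 0)) := by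
        intro x
        by_cases hxa : x = a <;> by_cases hxb : x = b <;>
          simp_all [abs_of_nonneg, abs_of_nonpos]
      rw [Finset.sum_congr rfl (fun x _ => hpt x)]
      rw [← Finset.mul_sum, Finset.sum_add_distrib, Finset.sum_ite_eq' Finset.univ a (fun _ => (1:ℝ)),
        Finset.sum_ite_eq' Finset.univ b (fun _ => (1:ℝ))]
      simp; norm_num
  -- min of g on K
  obtain ⟨u₀, hu₀K, hu₀min⟩ := hKcompact.exists_isMinOn hKne ((gcont μ w).continuousOn)
  set ε := g u₀ with hε
  have hεpos : 0 < ε := by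
    rcases lt_or_eq_of_le (Finset.sum_nonneg (fun x _ => abs_nonneg _) : (0:ℝ) ≤ g u₀) with h | h
    · exact h
    exfalso
    have hzero : ∀ x, graphLap μ w u₀ x = 0 := by
      intro x
      have := (Finset.sum_eq_zero_iff_of_nonneg (fun x _ => abs_nonneg (graphLap μ w u₀ x))).mp
        h.symm x (mem_univ x)
      exact abs_eq_zero.mp this
    have hconst := harmonic_const μ w hμ hw hconn u₀ hzero
    -- u₀ constant with sum 0 ⇒ u₀ = 0 ⇒ Σ|u₀| = 0 ≠ 1
    obtain ⟨x₀⟩ := ‹Nonempty V›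
    have hsum0 : ∑ x, u₀ x = 0 := hu₀K.1
    have : ∀ x, u₀ x = u₀ x₀ := fun x => hconst x x₀
    rw [Finset.sum_congr rfl (fun x _ => this x), Finset.sum_const, nsmul_eq_mul] at hsum0
    have hcard' : 0 < (Finset.univ : Finset V).card := Finset.card_pos.mpr Finset.univ_nonempty
    have hcard : (0:ℝ) < ((Finset.univ : Finset V).card : ℝ) := by exact_mod_cast hcard'
    have hx0 : u₀ x₀ = 0 := by
      rcases mul_eq_zero.mp hsum0 with h' | h'
      · linarith
      · exact h'
    have h1 : (∑ x, |u₀ x|) = 0 := by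
      apply Finset.sum_eq_zero
      intro x _
      rw [this x, hx0, abs_zero]
    rw [hu₀K.2] at h1
    norm_num at h1
  set n : ℝ := (Fintype.card V : ℝ) with hn
  have hnpos : 0 < n := by
    have h0 : 0 < Fintype.card V := Fintype.card_pos
    rw [hn]
    exact_mod_cast h0
  refine ⟨2 * n / ε, by positivity, fun u => ?_⟩
  set c : ℝ := (∑ x, u x) / n with hc
  set v : V → ℝ := fun x => u x - c with hv
  have hΔ : ∀ x, graphLap μ w v x = graphLap μ w u x := fun x => graphLap_shift μ w c u x
  have hsumv : ∑ x, v x = 0 := by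
    simp only [hv]
    rw [Finset.sum_sub_distrib, Finset.sum_const, nsmul_eq_mul, hc]
    field_simp
    rw [Finset.card_univ, ← hn]; ring
  set s : ℝ := ∑ x, |v x| with hs
  have hsnn : 0 ≤ s := Finset.sum_nonneg (fun x _ => abs_nonneg _)
  obtain ⟨p, -, hp⟩ := Finset.exists_mem_eq_sup' (Finset.univ_nonempty (α := V)) u
  obtain ⟨q, -, hq⟩ := Finset.exists_mem_eq_inf' (Finset.univ_nonempty (α := V)) u
  have hLHS : Finset.univ.sup' Finset.univ_nonempty u
      - Finset.univ.inf' Finset.univ_nonempty u ≤ 2 * s := by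
    rw [hp, hq]
    have h1 : u p - u q = v p - v q := by simp [hv]
    have h2 : |v p| ≤ s := Finset.single_le_sum (fun i _ => abs_nonneg (v i)) (mem_univ p)
    have h3 : |v q| ≤ s := Finset.single_le_sum (fun i _ => abs_nonneg (v i)) (mem_univ q)
    have := abs_le.mp h2
    have := abs_le.mp h3
    linarith [abs_le.mp h2, abs_le.mp h3]
  rcases eq_or_lt_of_le hsnn with hs0 | hspos
  · -- s = 0: all v = 0, LHS ≤ 0 ≤ RHS
    have hv0 : ∀ x, v x = 0 := by
      intro x
      have := (Finset.sum_eq_zero_iff_of_nonneg (fun i _ => abs_nonneg (v i))).mp hs0.symm x (mem_univ x)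
      exact abs_eq_zero.mp this
    have : Finset.univ.sup' Finset.univ_nonempty u
        - Finset.univ.inf' Finset.univ_nonempty u ≤ 0 := by
      rw [hp, hq]
      have : u p - u q = v p - v q := by simp [hv]
      rw [this, hv0 p, hv0 q]; norm_num
    calc _ ≤ (0:ℝ) := this
    _ ≤ _ := by
        apply mul_nonneg (by positivity) (hRHSnn u)
  · -- s > 0: normalize
    set u' : V → ℝ := fun x => s⁻¹ * v x with hu'
    have hu'K : u' ∈ K := by
      constructor
      · simp only [hu', ← Finset.mul_sum]
        rw [hsumv]; ring
      · have : ∀ x, |u' x| = s⁻¹ * |v x| := by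
          intro x
          rw [hu', abs_mul, abs_of_nonneg (by positivity : (0:ℝ) ≤ s⁻¹)]
        rw [Finset.sum_congr rfl (fun x _ => this x), ← Finset.mul_sum, ← hs]
        field_simp
    have hgu' : ε ≤ g u' := hu₀min hu'K
    have hgscale : g u' = s⁻¹ * g v := by
      simp only [hg, hu']
      rw [Finset.mul_sum]
      apply Finset.sum_congr rfl
      intro x _
      rw [graphLap_smul, abs_mul, abs_of_nonneg (by positivity : (0:ℝ) ≤ s⁻¹)]
    have hgv : g v = g u := by
      apply Finset.sum_congr rfl
      intro x _
      rw [hΔ x]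
    -- g u ≤ n * sup'
    set S := Finset.univ.sup' Finset.univ_nonempty (fun x => |graphLap μ w u x|) with hS
    have hgu_le : g u ≤ n * S := by
      have : ∀ x ∈ Finset.univ, |graphLap μ w u x| ≤ S :=
        fun x _ => Finset.le_sup' (fun x => |graphLap μ w u x|) (mem_univ x)
      calc g u ≤ ∑ _x : V, S := Finset.sum_le_sum this
      _ = n * S := by rw [Finset.sum_const, nsmul_eq_mul]; rfl
    have hεs : ε * s ≤ g u := by
      have h1 : ε ≤ s⁻¹ * g v := by rw [← hgscale]; exact hgu'
      have h2 : ε * s ≤ g v := by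
        rw [mul_comm]
        calc s * ε ≤ s * (s⁻¹ * g v) := by
              apply mul_le_mul_of_nonneg_left h1 hsnn
        _ = g v := by field_simp
      rw [← hgv]; exact h2
    -- combine
    have hfin : ε * s ≤ n * S := le_trans hεs hgu_le
    have : s ≤ n * S / ε := by
      rw [le_div_iff₀ hεpos]
      linarith [hfin]
    calc Finset.univ.sup' Finset.univ_nonempty u
        - Finset.univ.inf' Finset.univ_nonempty u ≤ 2 * s := hLHS
    _ ≤ 2 * (n * S / ε) := by linarith
    _ = 2 * n / ε * S := by ring
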